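/- If l : (0,∞) → (0,∞) is slowly varying, then for every ε > 0, l(x) x^{-ε} → 0 and l(x) x^{ε} → ∞ as x → ∞. -/

import Mathlib

open Filter Topology

section Aux
open MeasureTheory

/-- Karamata's uniform convergence theorem (light version). -/
private lemma slowVarying_uct (f : ℝ → ℝ) (hf : Measurable f)
    (h : ∀ t : ℝ, Tendsto (fun u => f (u + t) - f u) atTop (nhds 0))
    (δ : ℝ) (hδ : 0 < δ) :
    ∀ᶠ u in atTop, ∀ t ∈ Set.Icc (0:ℝ) 1, |f (u + t) - f u| ≤ δ := by
  by_contra hc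
  rw [Filter.not_eventually] at hc
  have hc' : ∀ n : ℕ, ∃ u, (n:ℝ) ≤ u ∧ ∃ t, t ∈ Set.Icc (0:ℝ) 1 ∧ δ < |f (u + t) - f u| := by
    intro n
    obtain ⟨u, hu, hP⟩ := (frequently_atTop.mp hc) n
    push_neg at hP
    obtain ⟨t, ht, h2⟩ := hP
    exact ⟨u, hu, t, ht, h2⟩
  choose u hu t ht hgt using hc'
  have hulim : Tendsto u atTop atTop :=
    tendsto_atTop_mono hu tendsto_natCast_atTop_atTop
  set v : ℕ → ℝ := fun m => u m + t m with hv
  have hvlim : Tendsto v atTop atTop := by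
    apply tendsto_atTop_mono (fun m => ?_) hulim
    have := (ht m).1; simp [hv]; linarith
  -- the sets
  set A : ℕ → Set ℝ := fun n =>
    Set.Icc (0:ℝ) 2 ∩ ⋂ (m : ℕ) (_ : n ≤ m), {s | |f (u m + s) - f (u m)| ≤ δ/2} with hA
  set B : ℕ → Set ℝ := fun n =>
    Set.Icc (0:ℝ) 2 ∩ ⋂ (m : ℕ) (_ : n ≤ m), {s | |f (v m + s) - f (v m)| ≤ δ/2} with hB
  have measA : ∀ w : ℕ → ℝ, ∀ n, MeasurableSet
      (Set.Icc (0:ℝ) 2 ∩ ⋂ (m : ℕ) (_ : n ≤ m), {s | |f (w m + s) - f (w m)| ≤ δ/2}) := by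
    intro w n
    refine measurableSet_Icc.inter (MeasurableSet.iInter fun m => MeasurableSet.iInter fun _ => ?_)
    exact measurableSet_le (((hf.comp (measurable_const.add measurable_id)).sub
      measurable_const).abs) measurable_const
  have monoA : ∀ w : ℕ → ℝ, Monotone (fun n =>
      Set.Icc (0:ℝ) 2 ∩ ⋂ (m : ℕ) (_ : n ≤ m), {s | |f (w m + s) - f (w m)| ≤ δ/2}) := by
    intro w n n' hnn'
    refine Set.inter_subset_inter_right _ ?_
    intro s hs
    simp only [Set.mem_iInter] at hs ⊢
    intro m hm; exact hs m (hnn'.trans hm)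
  have unionA : ∀ w : ℕ → ℝ, Tendsto w atTop atTop →
      (⋃ n, Set.Icc (0:ℝ) 2 ∩ ⋂ (m : ℕ) (_ : n ≤ m), {s | |f (w m + s) - f (w m)| ≤ δ/2})
        = Set.Icc (0:ℝ) 2 := by
    intro w hw
    apply Set.Subset.antisymm
    · exact Set.iUnion_subset fun n => Set.inter_subset_left
    · intro s hs
      have h1 : Tendsto (fun m => f (w m + s) - f (w m)) atTop (nhds 0) := (h s).comp hw
      have h2 : ∀ᶠ m in atTop, |f (w m + s) - f (w m)| ≤ δ/2 := by
        have := h1.abs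
        rw [abs_zero] at this
        exact this.eventually_le_const (by linarith)
      obtain ⟨N, hN⟩ := eventually_atTop.mp h2
      refine Set.mem_iUnion.mpr ⟨N, hs, ?_⟩
      simp only [Set.mem_iInter]
      exact fun m hm => hN m hm
  have volA : ∀ w : ℕ → ℝ, Tendsto w atTop atTop → ∃ N : ℕ,
      ENNReal.ofReal (7/4) < volume
        (Set.Icc (0:ℝ) 2 ∩ ⋂ (m : ℕ) (_ : N ≤ m), {s | |f (w m + s) - f (w m)| ≤ δ/2}) := by
    intro w hw
    have htend := tendsto_measure_iUnion_atTop (μ := volume) (monoA w)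
    rw [unionA w hw, Real.volume_Icc] at htend
    have hlt : ENNReal.ofReal (7/4) < ENNReal.ofReal (2 - 0) := by
      rw [ENNReal.ofReal_lt_ofReal_iff (by norm_num)]; norm_num
    exact ((htend.eventually (eventually_gt_nhds hlt)).exists)
  obtain ⟨NA, hNA⟩ := volA u hulim
  obtain ⟨NB, hNB⟩ := volA v hvlim
  set n := max NA NB with hn
  have hAn : ENNReal.ofReal (7/4) < volume (A n) :=
    hNA.trans_le (measure_mono (monoA u (le_max_left _ _)))
  have hBn : ENNReal.ofReal (7/4) < volume (B n) :=
    hNB.trans_le (measure_mono (monoA v (le_max_right _ _)))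
  -- translate B
  set S : Set ℝ := (fun s => s + (-(t n))) ⁻¹' (B n) with hS
  have measS : MeasurableSet S := (measA v n).preimage (measurable_id.add_const _)
  have volS : volume S = volume (B n) := by
    rw [hS]; exact measure_preimage_add_right volume _ _
  have hSsub : S ⊆ Set.Icc (0:ℝ) 3 := by
    intro s hs
    have h1 : s + (-(t n)) ∈ Set.Icc (0:ℝ) 2 := (Set.mem_preimage.mp hs).1
    have := (ht n).1; have := (ht n).2
    constructor <;> [linarith [h1.1]; linarith [h1.2]]
  have hAsub : A n ⊆ Set.Icc (0:ℝ) 3 := fun s hs =>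
    ⟨hs.1.1, hs.1.2.trans (by norm_num)⟩
  -- intersection nonempty
  have hne : (A n ∩ S).Nonempty := by
    by_contra hemp
    rw [Set.not_nonempty_iff_eq_empty] at hemp
    have hdisj : Disjoint (A n) S := Set.disjoint_iff_inter_eq_empty.mpr hemp
    have h1 : volume (A n ∪ S) = volume (A n) + volume S :=
      measure_union hdisj measS
    have h2 : volume (A n ∪ S) ≤ volume (Set.Icc (0:ℝ) 3) :=
      measure_mono (Set.union_subset hAsub hSsub)
    rw [Real.volume_Icc, h1, volS] at h2
    have h3 : ENNReal.ofReal (7/4) + ENNReal.ofReal (7/4) ≤ ENNReal.ofReal (3 - 0) :=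
      le_trans (add_le_add hAn.le hBn.le) h2
    rw [← ENNReal.ofReal_add (by norm_num) (by norm_num),
      ENNReal.ofReal_le_ofReal_iff (by norm_num)] at h3
    norm_num at h3
  obtain ⟨s, hsA, hsS⟩ := hne
  have h1 : |f (u n + s) - f (u n)| ≤ δ/2 := by
    have := hsA.2
    simp only [Set.mem_iInter] at this
    exact this n le_rfl
  have h2 : |f (v n + (s + (-(t n)))) - f (v n)| ≤ δ/2 := by
    have := (Set.mem_preimage.mp hsS).2
    simp only [Set.mem_iInter] at this
    exact this n le_rfl
  have hvs : v n + (s + (-(t n))) = u n + s := by simp [hv]; ring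
  rw [hvs] at h2
  have : |f (u n + t n) - f (u n)| ≤ δ := by
    calc |f (u n + t n) - f (u n)|
        ≤ |f (u n + t n) - f (u n + s)| + |f (u n + s) - f (u n)| := abs_sub_le _ _ _
      _ ≤ δ/2 + δ/2 := by
          refine add_le_add ?_ h1
          rw [abs_sub_comm]; simpa [hv] using h2
      _ = δ := by ring
  exact absurd (hgt n) (not_lt.mpr this)

private lemma slowVarying_growth_aux (f : ℝ → ℝ) (δ U : ℝ) (hδ : 0 < δ)
    (H : ∀ u ≥ U, ∀ t ∈ Set.Icc (0:ℝ) 1, |f (u + t) - f u| ≤ δ) :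
    ∀ x ≥ U, |f x - f U| ≤ δ * (x - U + 1) := by
  have key : ∀ n : ℕ, ∀ x, U ≤ x → x ≤ U + n → |f x - f U| ≤ δ * n := by
    intro n
    induction n with
    | zero => intro x h1 h2; simp at h2 ⊢; have : x = U := le_antisymm h2 h1; simp [this]
    | succ n ih =>
      intro x h1 h2
      push_cast at h2 ⊢
      rcases le_or_gt x (U + n) with hle | hlt
      · calc |f x - f U| ≤ δ * n := ih x h1 hle
          _ ≤ δ * (n+1) := by nlinarith [Nat.cast_nonneg (α := ℝ) n]
      · have hw : U ≤ U + (n:ℝ) := by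
          have := Nat.cast_nonneg (α := ℝ) n; linarith
        have hstep : |f ((U + n) + (x - (U + n))) - f (U + n)| ≤ δ :=
          H (U + n) hw (x - (U + n)) ⟨by linarith, by linarith⟩
        have hxeq : (U + (n:ℝ)) + (x - (U + n)) = x := by ring
        rw [hxeq] at hstep
        have hih := ih (U + n) hw le_rfl
        calc |f x - f U| ≤ |f x - f (U + n)| + |f (U + n) - f U| := abs_sub_le _ _ _
          _ ≤ δ + δ * n := add_le_add hstep hih
          _ = δ * (n + 1) := by ring
  intro x hx
  set n := ⌈x - U⌉₊ with hn
  have h1 : x ≤ U + n := by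
    have := Nat.le_ceil (x - U); linarith
  have h2 : (n:ℝ) ≤ x - U + 1 := by
    have := (Nat.ceil_lt_add_one (by linarith : (0:ℝ) ≤ x - U)).le
    linarith
  calc |f x - f U| ≤ δ * n := key n x hx h1
    _ ≤ δ * (x - U + 1) := by nlinarith

private lemma slowVarying_slow_tendsto (f : ℝ → ℝ)
    (H : ∀ δ > (0:ℝ), ∀ᶠ u in atTop, ∀ t ∈ Set.Icc (0:ℝ) 1, |f (u + t) - f u| ≤ δ)
    (ε : ℝ) (hε : 0 < ε) :
    Tendsto (fun u => f u - ε * u) atTop atBot ∧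
    Tendsto (fun u => f u + ε * u) atTop atTop := by
  have hδ : (0:ℝ) < ε/2 := by linarith
  obtain ⟨U, hU⟩ := eventually_atTop.mp (H (ε/2) hδ)
  have key : ∀ x ≥ U, |f x - f U| ≤ (ε/2) * (x - U + 1) :=
    slowVarying_growth_aux f (ε/2) U hδ (fun u hu => hU u hu)
  have hlin : Tendsto (fun x : ℝ => (ε/2) * x) atTop atTop :=
    Tendsto.const_mul_atTop hδ tendsto_id
  constructor
  · apply tendsto_atBot_mono' atTop (f₁ := fun x => (f U + (ε/2) * (1 - U)) + (-((ε/2) * x)))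
    · filter_upwards [eventually_ge_atTop U] with x hx
      have h1 := (abs_le.mp (key x hx)).2
      nlinarith
    · exact tendsto_atBot_add_const_left _ _ (tendsto_neg_atTop_atBot.comp hlin)
  · apply tendsto_atTop_mono' atTop (f₁ := fun x => (f U - (ε/2) * (1 - U)) + (ε/2) * x)
    · filter_upwards [eventually_ge_atTop U] with x hx
      have h1 := (abs_le.mp (key x hx)).1
      nlinarith
    · exact tendsto_atTop_add_const_left _ _ hlin

end Aux

/-- If `l` is slowly varying (and measurable, positive on `(0,∞)`), then for every
`ε > 0`, `l(x) x^{-ε} → 0` and `l(x) x^{ε} → ∞` as `x → ∞`. -/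
theorem slowly_varying_power_limits
    (l : ℝ → ℝ) (hmeas : Measurable l) (hpos : ∀ x > (0 : ℝ), 0 < l x)
    (hslow : ∀ c > (0 : ℝ), Tendsto (fun x => l (c * x) / l x) atTop (nhds 1)) :
    ∀ ε > (0 : ℝ),
      Tendsto (fun x => l x * x ^ (-ε)) atTop (nhds 0) ∧
      Tendsto (fun x => l x * x ^ ε) atTop atTop := by
  intro ε hε
  set f : ℝ → ℝ := fun u => Real.log (l (Real.exp u)) with hf
  have hfmeas : Measurable f := Real.measurable_log.comp (hmeas.comp Real.measurable_exp)
  have hstep : ∀ t : ℝ, Tendsto (fun u => f (u + t) - f u) atTop (nhds 0) := by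
    intro t
    have h1 := hslow (Real.exp t) (Real.exp_pos t)
    have h2 : Tendsto (fun u => l (Real.exp t * Real.exp u) / l (Real.exp u))
        atTop (nhds 1) := h1.comp Real.tendsto_exp_atTop
    have h3 : Tendsto (fun u => Real.log (l (Real.exp t * Real.exp u) / l (Real.exp u)))
        atTop (nhds 0) := by
      have := (Real.continuousAt_log one_ne_zero).tendsto.comp h2
      rwa [Real.log_one] at this
    apply h3.congr
    intro u
    rw [Real.log_div (ne_of_gt (hpos _ (by positivity))) (ne_of_gt (hpos _ (Real.exp_pos u)))]
    simp only [hf]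
    rw [Real.exp_add, mul_comm]
  have hH : ∀ δ > (0:ℝ), ∀ᶠ u in atTop, ∀ t ∈ Set.Icc (0:ℝ) 1, |f (u + t) - f u| ≤ δ :=
    fun δ hδ => slowVarying_uct f hfmeas hstep δ hδ
  obtain ⟨hbot, htop⟩ := slowVarying_slow_tendsto f hH ε hε
  have heq : ∀ᶠ x : ℝ in atTop, ∀ s : ℝ,
      Real.exp (f (Real.log x) + s * Real.log x) = l x * x ^ s := by
    filter_upwards [eventually_gt_atTop (0:ℝ)] with x hx s
    rw [Real.exp_add, hf]
    simp only [Real.exp_log hx]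
    rw [Real.exp_log (hpos x hx), Real.rpow_def_of_pos hx, mul_comm s]
  constructor
  · have h1 : Tendsto (fun x => Real.exp (f (Real.log x) + (-ε) * Real.log x)) atTop (nhds 0) := by
      apply Real.tendsto_exp_atBot.comp
      have := hbot.comp Real.tendsto_log_atTop
      apply this.congr
      intro x; simp; ring
    apply h1.congr'
    filter_upwards [heq] with x hx using hx (-ε)
  · have h1 : Tendsto (fun x => Real.exp (f (Real.log x) + ε * Real.log x)) atTop atTop := by
      apply Real.tendsto_exp_atTop.comp
      exact htop.comp Real.tendsto_log_atTop
    apply h1.congr'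
    filter_upwards [heq] with x hx using hx ε
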